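/- Let F be a field of characteristic ≠ 2. Suppose A = a₀·1 + a and B = b₀·1 + b in M₂(F) are invertible, A − 1 is invertible, AB ≠ BA, and A, B satisfy the fundamental equation. Suppose furthermore that λ₁, λ₂ ∈ F satisfy λ₁·a + λ₂·b + a×b = 0. Then det(A) = a₀² − λ₂² ≠ 0 and b₀·det(A) = λ₁·(det(A) − tr(A) − 2λ₂); equivalently, a₀ ≠ ±λ₂ and b₀ = λ₁·(1 − 2/(a₀ − λ₂)). -/

import Mathlib

open Matrix

/-- The cross product of traceless 2×2 matrices: `a×b = (ab - ba)/2`. -/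
noncomputable def matCross {F : Type*} [Field F] (a b : Matrix (Fin 2) (Fin 2) F) :
    Matrix (Fin 2) (Fin 2) F :=
  (2 : F)⁻¹ • (a * b - b * a)

set_option maxHeartbeats 4000000 in
/-- for non-commuting invertible solutions `A = a₀·1 + a`,
`B = b₀·1 + b` of the fundamental equation with `A − 1` invertible and a
relation `λ₁a + λ₂b + a×b = 0`, one has `det A = a₀² − λ₂² ≠ 0` and
`b₀ det A = λ₁(det A − tr A − 2λ₂)`; equivalently `a₀ ≠ ±λ₂` and
`b₀ = λ₁(1 − 2/(a₀ − λ₂))`. -/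
theorem stmt15 {F : Type*} [Field F] (h2 : (2 : F) ≠ 0)
    (a₀ b₀ : F) (a b A B : Matrix (Fin 2) (Fin 2) F)
    (ha : a.trace = 0) (hb : b.trace = 0)
    (hAdef : A = a₀ • (1 : Matrix (Fin 2) (Fin 2) F) + a)
    (hBdef : B = b₀ • (1 : Matrix (Fin 2) (Fin 2) F) + b)
    (hA : IsUnit A) (hB : IsUnit B) (hA1 : IsUnit (A - 1))
    (hnc : A * B ≠ B * A)
    (hfund : A⁻¹ * B⁻¹ * A * B - B⁻¹ * A * B = B * A⁻¹ * B⁻¹ * A - A)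
    (l₁ l₂ : F) (hrel : l₁ • a + l₂ • b + matCross a b = 0) :
    (A.det = a₀ ^ 2 - l₂ ^ 2 ∧ A.det ≠ 0 ∧
        b₀ * A.det = l₁ * (A.det - A.trace - 2 * l₂)) ∧
      (a₀ ≠ l₂ ∧ a₀ ≠ -l₂ ∧ b₀ = l₁ * (1 - 2 / (a₀ - l₂))) := by
  have h2i : (2 : F) * (2 : F)⁻¹ = 1 := mul_inv_cancel₀ h2
  rw [Matrix.trace_fin_two] at ha hb
  obtain ⟨p, q, r, rfl⟩ : ∃ p q r, a = !![p, q; r, -p] :=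
    ⟨a 0 0, a 0 1, a 1 0, by
      ext i j; fin_cases i <;> fin_cases j <;> simp <;> linear_combination ha⟩
  obtain ⟨s, u, v, rfl⟩ : ∃ s u v, b = !![s, u; v, -s] :=
    ⟨b 0 0, b 0 1, b 1 0, by
      ext i j; fin_cases i <;> fin_cases j <;> simp <;> linear_combination hb⟩
  subst hAdef hBdef
  have hA2 : a₀ • (1 : Matrix (Fin 2) (Fin 2) F) + !![p, q; r, -p] = !![a₀+p, q; r, a₀-p] := by
    ext i j; fin_cases i <;> fin_cases j <;> simp [Matrix.one_apply] <;> ring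
  have hB2 : b₀ • (1 : Matrix (Fin 2) (Fin 2) F) + !![s, u; v, -s] = !![b₀+s, u; v, b₀-s] := by
    ext i j; fin_cases i <;> fin_cases j <;> simp [Matrix.one_apply] <;> ring
  rw [hA2] at hA hnc hfund ⊢
  rw [hB2] at hB hnc hfund
  -- nonvanishing determinants
  have hd : ((a₀+p)*(a₀-p) - q*r : F) ≠ 0 := by
    have h := ((Matrix.isUnit_iff_isUnit_det _).mp hA).ne_zero
    rwa [Matrix.det_fin_two_of] at h
  have he : ((b₀+s)*(b₀-s) - u*v : F) ≠ 0 := by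
    have h := ((Matrix.isUnit_iff_isUnit_det _).mp hB).ne_zero
    rwa [Matrix.det_fin_two_of] at h
  -- explicit inverses
  have hAinv : (!![a₀+p, q; r, a₀-p] : Matrix (Fin 2) (Fin 2) F)⁻¹
      = ((a₀+p)*(a₀-p) - q*r)⁻¹ • !![a₀-p, -q; -r, a₀+p] := by
    rw [Matrix.inv_def, Matrix.adjugate_fin_two, Matrix.det_fin_two_of, Ring.inverse_eq_inv']
    norm_num
  have hBinv : (!![b₀+s, u; v, b₀-s] : Matrix (Fin 2) (Fin 2) F)⁻¹
      = ((b₀+s)*(b₀-s) - u*v)⁻¹ • !![b₀-s, -u; -v, b₀+s] := by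
    rw [Matrix.inv_def, Matrix.adjugate_fin_two, Matrix.det_fin_two_of, Ring.inverse_eq_inv']
    norm_num
  -- clear the inverses in the fundamental equation
  rw [hAinv, hBinv] at hfund
  replace hfund := congrArg
    (fun M => (((a₀+p)*(a₀-p) - q*r) * ((b₀+s)*(b₀-s) - u*v)) • M) hfund
  simp only [smul_sub, smul_mul_assoc, mul_smul_comm, smul_smul] at hfund
  rw [show ((a₀+p)*(a₀-p) - q*r) * ((b₀+s)*(b₀-s) - u*v) *
        ((((b₀+s)*(b₀-s) - u*v))⁻¹ * (((a₀+p)*(a₀-p) - q*r))⁻¹) = 1 by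
      field_simp,
    show ((a₀+p)*(a₀-p) - q*r) * ((b₀+s)*(b₀-s) - u*v) * (((b₀+s)*(b₀-s) - u*v))⁻¹
        = ((a₀+p)*(a₀-p) - q*r) from mul_inv_cancel_right₀ he _,
    one_smul] at hfund
  -- entries of the (cleared) fundamental equation
  have k00 := congrFun (congrFun hfund 0) 0
  have k01 := congrFun (congrFun hfund 0) 1
  have k10 := congrFun (congrFun hfund 1) 0
  simp only [Matrix.mul_apply, Matrix.sub_apply, Matrix.smul_apply, Fin.sum_univ_two,
    smul_eq_mul, Matrix.of_apply, Matrix.cons_val', Matrix.cons_val_zero, Matrix.cons_val_one, Matrix.head_cons,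
    Matrix.empty_val', Matrix.cons_val_fin_one, Matrix.head_fin_const] at k00 k01 k10
  -- entries of the relation λ₁a + λ₂b + a×b = 0
  have m00 := congrFun (congrFun hrel 0) 0
  have m01 := congrFun (congrFun hrel 0) 1
  have m10 := congrFun (congrFun hrel 1) 0
  simp only [matCross, Matrix.mul_apply, Matrix.sub_apply, Matrix.smul_apply, Matrix.add_apply,
    Fin.sum_univ_two, smul_eq_mul, Matrix.of_apply, Matrix.cons_val', Matrix.cons_val_zero, Matrix.cons_val_one,
    Matrix.head_cons, Matrix.empty_val', Matrix.cons_val_fin_one, Matrix.head_fin_const,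
    Matrix.zero_apply] at m00 m01 m10
  have E1 : 2*l₁*p + 2*l₂*s + (q*v - r*u) = 0 := by
    linear_combination 2*m00 - (q*v - r*u)*h2i
  have E2 : l₁*q + l₂*u + (p*u - q*s) = 0 := by
    linear_combination m01 - (p*u - q*s)*h2i
  have E3 : l₁*r + l₂*v + (r*s - p*v) = 0 := by
    linear_combination m10 - (r*s - p*v)*h2i
  -- the commutator is nonzero
  have hcne : q*v - r*u ≠ 0 ∨ p*u - q*s ≠ 0 ∨ r*s - p*v ≠ 0 := by
    by_contra hcon
    push_neg at hcon
    obtain ⟨c1, c2, c3⟩ := hcon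
    apply hnc
    ext i j
    fin_cases i <;> fin_cases j <;>
      simp only [Matrix.mul_apply, Fin.sum_univ_two, Matrix.cons_val', Matrix.cons_val_zero,
        Matrix.cons_val_one, Matrix.head_cons, Matrix.empty_val', Matrix.cons_val_fin_one,
        Matrix.head_fin_const, Matrix.of_apply, Fin.mk_zero, Fin.mk_one]
    · linear_combination c1
    · linear_combination 2*c2
    · linear_combination 2*c3
    · linear_combination -c1
  -- cancellation helpers
  have hcanc2 : ∀ x y : F, x*(2*y) = 0 → x*y = 0 := by
    intro x y h
    have h' : (x*y)*2 = 0 := by linear_combination h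
    rcases mul_eq_zero.mp h' with h'' | h''
    · exact h''
    · exact absurd h'' h2
  have hcanc4 : ∀ x y : F, x*(4*y) = 0 → x*y = 0 := by
    intro x y h
    exact hcanc2 x y (hcanc2 x (2*y) (by linear_combination h))
  have keyzero : ∀ x : F, x*(q*v - r*u) = 0 → x*(p*u - q*s) = 0 → x*(r*s - p*v) = 0 → x = 0 := by
    intro x hx1 hx2 hx3
    rcases hcne with h | h | h
    · exact (mul_eq_zero.mp hx1).resolve_right h
    · exact (mul_eq_zero.mp hx2).resolve_right h
    · exact (mul_eq_zero.mp hx3).resolve_right h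
  -- scalar structure constants
  have hal : l₂^2 - (p^2 + q*r) = 0 := by
    apply keyzero
    · exact hcanc2 _ _ (by linear_combination (2*l₂*q+2*p*q)*E3 + (2*p*r-2*l₂*r)*E2 - 2*q*r*E1)
    · exact hcanc4 _ _ (by linear_combination (4*l₂*p-4*p^2-2*q*r)*E2 + (2*p*q-2*l₂*q)*E1 + 2*q^2*E3)
    · exact hcanc4 _ _ (by linear_combination (2*l₂*r+2*p*r)*E1 + 2*r^2*E2 + (-4*l₂*p-2*q*r-4*p^2)*E3)
  have hsg : (2*p*s + q*v + r*u) + 2*l₁*l₂ = 0 := by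
    apply keyzero
    · linear_combination (u*r+v*q)*E1 + (2*v*l₂-2*v*p)*E2 + (-2*u*l₂-2*u*p)*E3
    · exact hcanc2 _ _ (by linear_combination (-2*s*q+2*u*l₂)*E1 + (-4*s*l₂+4*s*p+2*u*r)*E2 + (-2*u*q)*E3)
    · exact hcanc2 _ _ (by linear_combination (-2*v*l₂-2*s*r)*E1 + (-2*v*r)*E2 + (2*v*q+4*s*l₂+4*s*p)*E3)
  have hbt : l₁^2 - (s^2 + u*v) = 0 := by
    apply keyzero
    · exact hcanc2 _ _ (by linear_combination (-2*u*v)*E1 + (2*v*l₁+2*v*s)*E2 + (-2*u*l₁+2*u*s)*E3)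
    · exact hcanc4 _ _ (by linear_combination (2*s*u+2*u*l₁)*E1 + (-4*s*l₁-4*s^2-2*u*v)*E2 + (2*u^2)*E3)
    · exact hcanc4 _ _ (by linear_combination (-2*v*l₁+2*s*v)*E1 + (2*v^2)*E2 + (-2*v*u+4*s*l₁-4*s^2)*E3)
  -- the equation ★ extracted from the fundamental equation
  have GW00 : (2*a₀-((a₀+p)*(a₀-p)-q*r))*(s^2+u*v)*(4*p)
      - (2*a₀-((a₀+p)*(a₀-p)-q*r))*(2*p*s+q*v+r*u)*(2*s)
      + (-((a₀+p)*(a₀-p)-q*r)*b₀+(2*p*s+q*v+r*u))*(2*(q*v-r*u)) = 0 := by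
    linear_combination 2*k00
  have GW01 : (2*a₀-((a₀+p)*(a₀-p)-q*r))*(s^2+u*v)*(4*q)
      - (2*a₀-((a₀+p)*(a₀-p)-q*r))*(2*p*s+q*v+r*u)*(2*u)
      + (-((a₀+p)*(a₀-p)-q*r)*b₀+(2*p*s+q*v+r*u))*(4*(p*u-q*s)) = 0 := by
    linear_combination 2*k01
  have GW10 : (2*a₀-((a₀+p)*(a₀-p)-q*r))*(s^2+u*v)*(4*r)
      - (2*a₀-((a₀+p)*(a₀-p)-q*r))*(2*p*s+q*v+r*u)*(2*v)
      + (-((a₀+p)*(a₀-p)-q*r)*b₀+(2*p*s+q*v+r*u))*(4*(r*s-p*v)) = 0 := by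
    linear_combination 2*k10
  -- conclude the coefficient identity
  have hG : -((a₀+p)*(a₀-p)-q*r)*b₀ + (2*p*s+q*v+r*u) - (2*a₀-((a₀+p)*(a₀-p)-q*r))*l₁ = 0 := by
    apply keyzero
    · exact hcanc2 _ _ (by
        linear_combination GW00 - (2*a₀-((a₀+p)*(a₀-p)-q*r))*2*l₁*E1
          + (2*a₀-((a₀+p)*(a₀-p)-q*r))*4*p*hbt + (2*a₀-((a₀+p)*(a₀-p)-q*r))*2*s*hsg)
    · exact hcanc4 _ _ (by
        linear_combination GW01 - (2*a₀-((a₀+p)*(a₀-p)-q*r))*4*l₁*E2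
          + (2*a₀-((a₀+p)*(a₀-p)-q*r))*4*q*hbt + (2*a₀-((a₀+p)*(a₀-p)-q*r))*2*u*hsg)
    · exact hcanc4 _ _ (by
        linear_combination GW10 - (2*a₀-((a₀+p)*(a₀-p)-q*r))*4*l₁*E3
          + (2*a₀-((a₀+p)*(a₀-p)-q*r))*4*r*hbt + (2*a₀-((a₀+p)*(a₀-p)-q*r))*2*v*hsg)
  -- finish
  have g4 : a₀ ≠ l₂ := by
    intro h
    apply hd
    rw [h]
    linear_combination hal
  have g5 : a₀ ≠ -l₂ := by
    intro h
    apply hd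
    rw [h]
    linear_combination hal
  refine ⟨⟨?_, ?_, ?_⟩, g4, g5, ?_⟩
  · rw [Matrix.det_fin_two_of]
    linear_combination hal
  · rw [Matrix.det_fin_two_of]
    exact hd
  · rw [Matrix.det_fin_two_of, Matrix.trace_fin_two_of]
    linear_combination -hG + hsg
  · have hne : a₀ - l₂ ≠ 0 := sub_ne_zero.mpr g4
    have hne' : a₀ + l₂ ≠ 0 := by
      intro h
      exact g5 (by linear_combination h)
    have hx : (b₀*(a₀-l₂))*(a₀+l₂) = (l₁*((a₀-l₂)-2))*(a₀+l₂) := by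
      linear_combination -hG + hsg + (l₁-b₀)*hal
    have hx' : b₀*(a₀-l₂) = l₁*((a₀-l₂)-2) := mul_right_cancel₀ hne' hx
    field_simp
    linear_combination hx'
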